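/- A group G possessing a nontrivial proper malnormal subgroup B whose conjugates cover G (a full Frobenius group) contains no involutions. -/
import Mathlib


def Malnormal {G : Type*} [Group G] (B : Subgroup G) : Prop :=
  ∀ g : G, g ∉ B → ∀ x ∈ B, g⁻¹ * x * g ∈ B → x = 1

theorem stmt_10 {G : Type*} [Group G] (B : Subgroup G)
    (hB : B ≠ ⊥) (hBtop : B ≠ ⊤) (hmal : Malnormal B)
    (hcover : ∀ g : G, ∃ h : G, h⁻¹ * g * h ∈ B) :
    ∀ g : G, g * g = 1 → g = 1 := by
  intro t ht2
  by_contra htne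
  obtain ⟨h, huB⟩ := hcover t
  set u : G := h⁻¹ * t * h with hu_def
  have hu2 : u * u = 1 := by
    have : u * u = h⁻¹ * (t * t) * h := by rw [hu_def]; group
    rw [this, ht2]; group
  have huinv : u⁻¹ = u := by
    rw [eq_comm, eq_inv_iff_mul_eq_one]; exact hu2
  have hune : u ≠ 1 := by
    intro hu1
    apply htne
    have : t = h * u * h⁻¹ := by rw [hu_def]; group
    rw [this, hu1]; group
  -- pick a ∉ B
  obtain ⟨a, haB⟩ : ∃ a : G, a ∉ B := by
    by_contra hall
    push_neg at hall
    exact hBtop ((Subgroup.eq_top_iff' B).mpr hall)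
  set s : G := a * u * a⁻¹ with hs_def
  have hsB : s ∉ B := by
    intro hsmem
    apply hune
    refine hmal a⁻¹ (fun hmem => haB (B.inv_mem_iff.mp hmem)) u huB ?_
    have : a⁻¹⁻¹ * u * a⁻¹ = s := by rw [hs_def]; group
    rw [this]; exact hsmem
  have hs2 : s * s = 1 := by
    have : s * s = a * (u * u) * a⁻¹ := by rw [hs_def]; group
    rw [this, hu2]; group
  have hsinv : s⁻¹ = s := by
    rw [eq_comm, eq_inv_iff_mul_eq_one]; exact hs2
  set x : G := u * s with hx_def
  have hxne : x ≠ 1 := by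
    intro hx1
    apply hsB
    have : s = u⁻¹ := (inv_eq_of_mul_eq_one_right hx1).symm
    rw [this, huinv]; exact huB
  have hux : u⁻¹ * x * u = x⁻¹ := by
    rw [hx_def, huinv, mul_inv_rev, hsinv, huinv]
    calc u * (u * s) * u = (u * u) * (s * u) := by group
      _ = s * u := by rw [hu2]; group
  have hsx : s⁻¹ * x * s = x⁻¹ := by
    rw [hx_def, hsinv, mul_inv_rev, hsinv, huinv]
    calc s * (u * s) * s = (s * u) * (s * s) := by group
      _ = s * u := by rw [hs2]; group
  obtain ⟨k, hyB⟩ := hcover x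
  set y : G := k⁻¹ * x * k with hy_def
  have hyne : y ≠ 1 := by
    intro hy1
    apply hxne
    have : x = k * y * k⁻¹ := by rw [hy_def]; group
    rw [this, hy1]; group
  have hkuk : k⁻¹ * u * k ∈ B := by
    by_contra hc
    apply hyne
    refine hmal (k⁻¹ * u * k) hc y hyB ?_
    have : (k⁻¹ * u * k)⁻¹ * y * (k⁻¹ * u * k) = k⁻¹ * (u⁻¹ * x * u) * k := by
      rw [hy_def]; group
    rw [this, hux]
    have : k⁻¹ * x⁻¹ * k = y⁻¹ := by rw [hy_def]; group
    rw [this]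
    exact B.inv_mem hyB
  have hksk : k⁻¹ * s * k ∈ B := by
    by_contra hc
    apply hyne
    refine hmal (k⁻¹ * s * k) hc y hyB ?_
    have e1 : (k⁻¹ * s * k)⁻¹ * y * (k⁻¹ * s * k) = k⁻¹ * (s⁻¹ * x * s) * k := by
      rw [hy_def]; group
    rw [e1, hsx]
    have e2 : k⁻¹ * x⁻¹ * k = y⁻¹ := by rw [hy_def]; group
    rw [e2]
    exact B.inv_mem hyB
  have hkB : k ∈ B := by
    by_contra hkB
    exact hune (hmal k hkB u huB hkuk)
  apply hsB
  have : s = k * (k⁻¹ * s * k) * k⁻¹ := by group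
  rw [this]
  exact B.mul_mem (B.mul_mem hkB hksk) (B.inv_mem hkB)
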